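/- Let P be an Ising model on variables x_0, x_1, …, x_n with partition function Z_P. Fix 1 ≤ k ≤ n and δ > 0, and let Q be the Ising model with the same parameters except w'_{0,k} = w_{0,k} + δ, with partition function Z_Q. Then 0 ≤ Σ_{x ∈ {−1,1}^{n+1} : x_0 x_k = −1} Q(x) ≤ exp(−δ) · Z_P / Z_Q. -/
import Mathlib


open Finset

/-- The spin value (`+1` or `−1`) encoded by a Boolean. -/
noncomputable def spin (b : Bool) : ℝ := if b then 1 else -1

/-- The (unnormalized) weight of a configuration `x ∈ {−1,1}^N` of the Ising model with
pair parameters `w i j` (used for `i < j`) and field parameters `h i`: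
`E(x) = exp(Σ_{i<j} w_{i,j} x_i x_j + Σ_i h_i x_i)`. -/
noncomputable def isingWeight {N : ℕ} (w : Fin N → Fin N → ℝ) (h : Fin N → ℝ)
    (x : Fin N → Bool) : ℝ :=
  Real.exp ((∑ i, ∑ j ∈ Finset.Ioi i, w i j * spin (x i) * spin (x j)) +
    ∑ i, h i * spin (x i))

/-- The partition function `Z = Σ_x E(x)` of the Ising model. -/
noncomputable def isingZ {N : ℕ} (w : Fin N → Fin N → ℝ) (h : Fin N → ℝ) : ℝ :=
  ∑ x : Fin N → Bool, isingWeight w h x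

/-- The probability `P(x) = E(x)/Z` of a configuration of the Ising model. -/
noncomputable def isingProb {N : ℕ} (w : Fin N → Fin N → ℝ) (h : Fin N → ℝ)
    (x : Fin N → Bool) : ℝ :=
  isingWeight w h x / isingZ w h

open scoped Classical

/-- with `Q` obtained from the Ising model `P` (on `x_0, …, x_n`) by
replacing `w_{0,k}` with `w_{0,k} + δ` (`δ > 0`), we have
`0 ≤ Σ_{x : x_0 x_k = −1} Q(x) ≤ exp(−δ) · Z_P / Z_Q`. -/
theorem ising_tilted_disagreement_mass_bound
    (n : ℕ) (w : Fin (n + 1) → Fin (n + 1) → ℝ) (h : Fin (n + 1) → ℝ)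
    (k : Fin (n + 1)) (hk : k ≠ 0) (δ : ℝ) (hδ : 0 < δ)
    (w' : Fin (n + 1) → Fin (n + 1) → ℝ)
    (hw' : ∀ i j, w' i j = if i = 0 ∧ j = k then w i j + δ else w i j) :
    0 ≤ (∑ x ∈ Finset.univ.filter
            (fun x : Fin (n + 1) → Bool => spin (x 0) * spin (x k) = -1),
          isingProb w' h x) ∧
    (∑ x ∈ Finset.univ.filter
        (fun x : Fin (n + 1) → Bool => spin (x 0) * spin (x k) = -1),
      isingProb w' h x)
      ≤ Real.exp (-δ) * isingZ w h / isingZ w' h := by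

  have hwpos : ∀ (W : Fin (n+1) → Fin (n+1) → ℝ) x, 0 < isingWeight W h x := by
    intro W x; exact Real.exp_pos _
  have hZpos : ∀ (W : Fin (n+1) → Fin (n+1) → ℝ), 0 < isingZ W h := by
    intro W
    exact Finset.sum_pos (fun x _ => hwpos W x) ⟨fun _ => true, Finset.mem_univ _⟩
  have hkpos : (0 : Fin (n+1)) < k := Fin.pos_of_ne_zero hk
  have hweq : ∀ x : Fin (n+1) → Bool,
      isingWeight w' h x = Real.exp (δ * spin (x 0) * spin (x k)) * isingWeight w h x := by
    intro x
    unfold isingWeight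
    rw [← Real.exp_add]
    congr 1
    have key : (∑ i, ∑ j ∈ Finset.Ioi i, w' i j * spin (x i) * spin (x j))
        = δ * spin (x 0) * spin (x k) +
          (∑ i, ∑ j ∈ Finset.Ioi i, w i j * spin (x i) * spin (x j)) := by
      have h1 : ∀ i j : Fin (n+1), w' i j * spin (x i) * spin (x j)
          = (if j = k ∧ i = 0 then δ * spin (x 0) * spin (x k) else 0)
            + w i j * spin (x i) * spin (x j) := by
        intro i j
        rw [hw' i j]
        by_cases hij : i = 0 ∧ j = k
        · obtain ⟨hi, hj⟩ := hij
          subst hi; subst hj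
          simp; ring
        · rw [if_neg hij, if_neg (fun hc => hij ⟨hc.2, hc.1⟩)]
          ring
      simp_rw [h1, Finset.sum_add_distrib]
      congr 1
      have h2 : ∀ i : Fin (n+1),
          (∑ j ∈ Finset.Ioi i, if j = k ∧ i = 0 then δ * spin (x 0) * spin (x k) else 0)
          = if i = 0 then δ * spin (x 0) * spin (x k) else 0 := by
        intro i
        by_cases hi : i = 0
        · subst hi
          rw [if_pos rfl]
          simp only [eq_self_iff_true, and_true]
          rw [Finset.sum_ite_eq' (Finset.Ioi (0 : Fin (n+1))) k
            (fun _ => δ * spin (x 0) * spin (x k))]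
          rw [if_pos (Finset.mem_Ioi.mpr hkpos)]
        · simp [hi]
      simp_rw [h2]
      rw [Finset.sum_ite_eq' Finset.univ (0 : Fin (n+1))
        (fun _ => δ * spin (x 0) * spin (x k))]
      simp
    rw [key]; ring
  set S := Finset.univ.filter
      (fun x : Fin (n + 1) → Bool => spin (x 0) * spin (x k) = -1) with hS
  have hsum : (∑ x ∈ S, isingWeight w' h x)
      = Real.exp (-δ) * ∑ x ∈ S, isingWeight w h x := by
    rw [Finset.mul_sum]
    refine Finset.sum_congr rfl (fun x hx => ?_)
    rw [hweq x]
    have hx' : spin (x 0) * spin (x k) = -1 := (Finset.mem_filter.mp hx).2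
    congr 1
    rw [mul_assoc, hx']
    ring_nf
  have hprob : (∑ x ∈ S, isingProb w' h x)
      = (∑ x ∈ S, isingWeight w' h x) / isingZ w' h := by
    rw [Finset.sum_div]; rfl
  constructor
  · rw [hprob]
    apply div_nonneg _ (hZpos w').le
    exact Finset.sum_nonneg (fun x _ => (hwpos w' x).le)
  · rw [hprob, hsum]
    apply div_le_div_of_nonneg_right ?_ (hZpos w').le
    apply mul_le_mul_of_nonneg_left _ (Real.exp_pos _).le
    exact Finset.sum_le_sum_of_subset_of_nonneg (Finset.filter_subset _ _)
      (fun x _ _ => (hwpos w x).le)
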